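/- Let Π be a ground HEX-program and A a complete model of Π. A is an answer set of Π (a ≤_Π-minimal model of the FLP-reduct fΠ^A) if and only if A is unfounded-free, i.e., Aᵀ ∩ X = ∅ for every unfounded set X of Π wrt. A. -/
import Mathlib


/-- A ground external atom: a set of input atoms and an oracle function whose
value depends only on the assignment restricted to the input atoms. -/
structure ExtAtom (Atom : Type) where
  inputs : Finset Atom
  eval : (Atom → Bool) → Bool
  dep : ∀ A B : Atom → Bool, (∀ a ∈ inputs, A a = B a) → eval A = eval B

/-- A ground HEX-rule: head, ordinary positive body, ordinary negative body,
positive external body, negative external body. -/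
structure Rule (Atom : Type) where
  head : Finset Atom
  posOrd : Finset Atom
  negOrd : Finset Atom
  posExt : List (ExtAtom Atom)
  negExt : List (ExtAtom Atom)

/-- A ground HEX-program is a set of rules (finiteness is assumed explicitly). -/
abbrev Program (Atom : Type) := Set (Rule Atom)

variable {Atom : Type} [DecidableEq Atom]

/-- The ordinary atoms occurring in a rule. -/
def Rule.atoms (r : Rule Atom) : Finset Atom :=
  r.head ∪ r.posOrd ∪ r.negOrd ∪
    ((r.posExt ++ r.negExt).foldr (fun e s => e.inputs ∪ s) ∅)

/-- The ordinary atoms `A(Π)` occurring in a program. -/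
def progAtoms (P : Program Atom) : Set Atom := ⋃ r ∈ P, (r.atoms : Set Atom)

/-- `A ∪̇¬ X`: set all atoms of `X` to false in `A`. -/
def unplug (A : Atom → Bool) (X : Finset Atom) : Atom → Bool :=
  fun a => A a && !(decide (a ∈ X))

/-- All body literals of `r` are true wrt. the complete assignment `B`. -/
def Rule.bodyTrueAt (r : Rule Atom) (B : Atom → Bool) : Prop :=
  (∀ a ∈ r.posOrd, B a = true) ∧ (∀ a ∈ r.negOrd, B a = false) ∧
  (∀ e ∈ r.posExt, e.eval B = true) ∧ (∀ e ∈ r.negExt, e.eval B = false)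

/-- Some body literal of `r` is false wrt. the complete assignment `B`. -/
def Rule.bodyFalseAt (r : Rule Atom) (B : Atom → Bool) : Prop :=
  (∃ a ∈ r.posOrd, B a = false) ∨ (∃ a ∈ r.negOrd, B a = true) ∨
  (∃ e ∈ r.posExt, e.eval B = false) ∨ (∃ e ∈ r.negExt, e.eval B = true)

/-- `X` is an unfounded set of `P` wrt. the complete assignment `A`
(Definition of unfounded sets for HEX-programs). -/
def isUnfounded (P : Program Atom) (A : Atom → Bool) (X : Finset Atom) : Prop :=
  ∀ r ∈ P, (r.head ∩ X).Nonempty →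
    r.bodyFalseAt A ∨ r.bodyFalseAt (unplug A X) ∨
    ∃ h ∈ r.head, h ∉ X ∧ A h = true

/-- `A` is a (complete) model of `P`. -/
def isModel (A : Atom → Bool) (P : Program Atom) : Prop :=
  ∀ r ∈ P, r.bodyTrueAt A → ∃ h ∈ r.head, A h = true

/-- Ordinary dependency `a → b`. -/
def ordDep (P : Program Atom) (a b : Atom) : Prop :=
  ∃ r ∈ P, a ∈ r.head ∧ b ∈ r.posOrd

/-- External dependency (e-edge) `a →ₑ b`. -/
def eDep (P : Program Atom) (a b : Atom) : Prop :=
  ∃ r ∈ P, a ∈ r.head ∧ ∃ e ∈ r.posExt ++ r.negExt, b ∈ e.inputs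

/-- The relation `→ᵈ = → ∪ →⁻¹ ∪ →ₑ`. -/
def dDep (P : Program Atom) (a b : Atom) : Prop :=
  ordDep P a b ∨ ordDep P b a ∨ eDep P a b

/-- `C` is a cut of the unfounded set `U`: `C ⊆ U`, `C` has no incoming or
internal e-edges from `U`, and there are no ordinary edges between `C` and
`U \ C` in either direction. -/
def isCut (P : Program Atom) (U C : Finset Atom) : Prop :=
  C ⊆ U ∧ (∀ a ∈ C, ∀ b ∈ U, ¬ eDep P b a) ∧
  (∀ a ∈ C, ∀ b ∈ U \ C, ¬ ordDep P a b ∧ ¬ ordDep P b a)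

/-- Some body literal of the rule corresponding to `r` in the guessing program
`Π̂` is false wrt. `B` extended to the compatible extension `Â` of `A`:
ordinary literals are evaluated at `B`, while external replacement atoms obtain
(by compatibility) the oracle value at `A`. -/
def Rule.bodyFalseHat (r : Rule Atom) (A B : Atom → Bool) : Prop :=
  (∃ a ∈ r.posOrd, B a = false) ∨ (∃ a ∈ r.negOrd, B a = true) ∨
  (∃ e ∈ r.posExt, e.eval A = false) ∨ (∃ e ∈ r.negExt, e.eval A = true)

/-- `X` (a set of ordinary atoms) is an unfounded set of the guessing program
`Π̂` wrt. the compatible extension `Â` of `A`.  Since `X` contains only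
ordinary atoms and the guessing rules have only replacement atoms in their
heads, this unfolds to the condition below, where replacement atoms keep their
(compatible) value under `Â ∪̇¬ X`. -/
def isUnfoundedHat (P : Program Atom) (A : Atom → Bool) (X : Finset Atom) : Prop :=
  ∀ r ∈ P, (r.head ∩ X).Nonempty →
    r.bodyFalseHat A A ∨ r.bodyFalseHat A (unplug A X) ∨
    ∃ h ∈ r.head, h ∉ X ∧ A h = true

/-- The set `S` contains a cycle under `→ᵈ` that uses at least one e-edge. -/
def hasECycleIn (P : Program Atom) (S : Set Atom) : Prop :=
  ∃ (n : ℕ) (c : ℕ → Atom),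
    (∀ i ≤ n, dDep P (c i) (c (i+1))) ∧ c 0 = c (n+1) ∧
    (∀ i ≤ n+1, c i ∈ S) ∧ ∃ i ≤ n, eDep P (c i) (c (i+1))

/-- `a` is a cyclic input atom: some `b` with `b →ₑ a` and a path from `a`
to `b` under `→ᵈ`. -/
def cyclicInput (P : Program Atom) (a : Atom) : Prop :=
  ∃ b, eDep P b a ∧ Relation.ReflTransGen (dDep P) a b

/-- The FLP-reduct `fΠ^A`. -/
def flpReduct (P : Program Atom) (A : Atom → Bool) : Program Atom :=
  { r ∈ P | r.bodyTrueAt A }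

/-- `A₁ ≤_Π A₂`. -/
def leP (P : Program Atom) (A₁ A₂ : Atom → Bool) : Prop :=
  ∀ a ∈ progAtoms P, A₁ a = true → A₂ a = true

/-- `A` is an answer set of `P`: a `≤_Π`-minimal model of the FLP-reduct. -/
def isAnswerSet (P : Program Atom) (A : Atom → Bool) : Prop :=
  isModel A (flpReduct P A) ∧
  ∀ A' : Atom → Bool, isModel A' (flpReduct P A) → leP P A' A → leP P A A'

/-- The dependency relation `→ ∪ →ₑ` used for strongly connected components. -/
def dep (P : Program Atom) (a b : Atom) : Prop := ordDep P a b ∨ eDep P a b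

/-- Mutual reachability under `→ ∪ →ₑ`. -/
def sameSCC (P : Program Atom) (a b : Atom) : Prop :=
  Relation.ReflTransGen (dep P) a b ∧ Relation.ReflTransGen (dep P) b a

/-- The strongly connected component of `a` under `→ ∪ →ₑ`. -/
def scc (P : Program Atom) (a : Atom) : Set Atom := { b | sameSCC P a b }

/-- The subprogram `Π_C` associated with a component `C`. -/
def subprog (P : Program Atom) (C : Set Atom) : Program Atom :=
  { r ∈ P | ∃ h ∈ r.head, h ∈ C }


set_option linter.unusedSectionVars false

section Aux
variable {Atom : Type} [DecidableEq Atom]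

lemma Rule.not_bodyFalse {r : Rule Atom} {B : Atom → Bool} (h : ¬ r.bodyFalseAt B) :
    r.bodyTrueAt B := by
  unfold Rule.bodyFalseAt at h
  push_neg at h
  obtain ⟨h1, h2, h3, h4⟩ := h
  refine ⟨fun a ha => ?_, fun a ha => ?_, fun e he => ?_, fun e he => ?_⟩
  · have := h1 a ha; simpa using this
  · have := h2 a ha; simpa using this
  · have := h3 e he; simpa using this
  · have := h4 e he; simpa using this

lemma Rule.not_both {r : Rule Atom} {B : Atom → Bool} (ht : r.bodyTrueAt B)
    (hf : r.bodyFalseAt B) : False := by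
  obtain ⟨h1, h2, h3, h4⟩ := ht
  rcases hf with ⟨a, ha, hfa⟩ | ⟨a, ha, hfa⟩ | ⟨e, he, hfe⟩ | ⟨e, he, hfe⟩
  · simp [h1 a ha] at hfa
  · simp [h2 a ha] at hfa
  · simp [h3 e he] at hfe
  · simp [h4 e he] at hfe

lemma mem_atoms_of_posOrd {r : Rule Atom} {a : Atom} (h : a ∈ r.posOrd) : a ∈ r.atoms := by
  simp [Rule.atoms, h]

lemma mem_atoms_of_negOrd {r : Rule Atom} {a : Atom} (h : a ∈ r.negOrd) : a ∈ r.atoms := by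
  simp [Rule.atoms, h]

lemma mem_atoms_of_head {r : Rule Atom} {a : Atom} (h : a ∈ r.head) : a ∈ r.atoms := by
  simp [Rule.atoms, h]

lemma mem_foldr_of_inputs {l : List (ExtAtom Atom)} {e : ExtAtom Atom} {a : Atom}
    (he : e ∈ l) (ha : a ∈ e.inputs) :
    a ∈ l.foldr (fun e s => e.inputs ∪ s) ∅ := by
  induction l with
  | nil => simp at he
  | cons x xs ih =>
    rcases List.mem_cons.1 he with rfl | he
    · simp [ha]
    · simp [ih he]

lemma mem_atoms_of_inputs {r : Rule Atom} {e : ExtAtom Atom} {a : Atom}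
    (he : e ∈ r.posExt ++ r.negExt) (ha : a ∈ e.inputs) : a ∈ r.atoms := by
  unfold Rule.atoms
  exact Finset.mem_union_right _ (mem_foldr_of_inputs he ha)

lemma mem_progAtoms' {P : Program Atom} {r : Rule Atom} {a : Atom}
    (hr : r ∈ P) (ha : a ∈ r.atoms) : a ∈ progAtoms P := by
  exact Set.mem_biUnion hr ha

end Aux

/-- Characterization of answer sets: a complete model `A` of `Π` is an answer
set iff it is unfounded-free, i.e., `Aᵀ` intersects no unfounded set of `Π`
wrt. `A`. -/
theorem answer_set_iff_unfounded_free (P : Program Atom) (hP : P.Finite)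
    (A : Atom → Bool) (hm : isModel A P) :
    isAnswerSet P A ↔
      ∀ X : Finset Atom, ↑X ⊆ progAtoms P → isUnfounded P A X →
        ∀ a ∈ X, A a = false := by
  constructor
  · -- answer set → unfounded-free
    rintro ⟨hmod, hmin⟩ X hXsub hXuf a haX
    by_contra hne
    have hAa : A a = true := by
      cases h : A a with
      | false => exact absurd h hne
      | true => rfl
    set A' : Atom → Bool := unplug A X with hA'
    have hmodA' : isModel A' (flpReduct P A) := by
      intro r hr hbt
      obtain ⟨hrP, hbtA⟩ := hr
      by_cases hne2 : (r.head ∩ X).Nonempty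
      · rcases hXuf r hrP hne2 with hf | hf | ⟨h0, hh0, hh0X, hh0A⟩
        · exact absurd hf (fun hf => Rule.not_both hbtA hf)
        · exact absurd hf (fun hf => Rule.not_both hbt hf)
        · exact ⟨h0, hh0, by simp [hA', unplug, hh0A, hh0X]⟩
      · obtain ⟨h0, hh0, hh0A⟩ := hm r hrP hbtA
        have hh0X : h0 ∉ X := fun hmem => hne2 ⟨h0, Finset.mem_inter.2 ⟨hh0, hmem⟩⟩
        exact ⟨h0, hh0, by simp [hA', unplug, hh0A, hh0X]⟩
    have hle : leP P A' A := by
      intro b _ hb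
      simp only [hA', unplug, Bool.and_eq_true] at hb
      exact hb.1
    have := hmin A' hmodA' hle a (hXsub haX) hAa
    simp [hA', unplug, haX] at this
  · -- unfounded-free → answer set
    intro huf
    refine ⟨fun r hr => hm r hr.1, ?_⟩
    intro A' hA' hle a0 ha0 hAa0
    by_contra hA'a0
    have hA'a0 : A' a0 = false := by
      cases h : A' a0 with
      | false => rfl
      | true => exact absurd h hA'a0
    classical
    set PA : Finset Atom := hP.toFinset.biUnion Rule.atoms with hPA
    have hPAmem : ∀ {r : Rule Atom} {b : Atom}, r ∈ P → b ∈ r.atoms → b ∈ PA := by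
      intro r b hrP hb
      exact Finset.mem_biUnion.2 ⟨r, hP.mem_toFinset.2 hrP, hb⟩
    set X : Finset Atom := PA.filter (fun b => A b = true ∧ A' b = false) with hX
    have hXsub : ↑X ⊆ progAtoms P := by
      intro b hb
      simp only [hX, Finset.coe_filter, Set.mem_setOf_eq] at hb
      obtain ⟨hbPA, _⟩ := hb
      obtain ⟨r, hrP, hbr⟩ := Finset.mem_biUnion.1 hbPA
      exact mem_progAtoms' (hP.mem_toFinset.1 hrP) hbr
    have hXmem : ∀ {b : Atom}, b ∈ X ↔ b ∈ PA ∧ A b = true ∧ A' b = false := by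
      intro b; simp [hX]
    have hXuf : isUnfounded P A X := by
      intro r hrP hne
      by_cases hf1 : r.bodyFalseAt A
      · exact Or.inl hf1
      by_cases hf2 : r.bodyFalseAt (unplug A X)
      · exact Or.inr (Or.inl hf2)
      have hbtA := Rule.not_bodyFalse hf1
      have hbtU := Rule.not_bodyFalse hf2
      -- A' agrees with unplug A X on atoms of r
      have key : ∀ b ∈ r.atoms, A' b = unplug A X b := by
        intro b hb
        have hbPA : b ∈ PA := hPAmem hrP hb
        have hbProg : b ∈ progAtoms P := mem_progAtoms' hrP hb
        by_cases hAb : A b = true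
        · by_cases hXb : b ∈ X
          · have : A' b = false := (hXmem.1 hXb).2.2
            simp [unplug, this, hXb]
          · have hA'b : A' b = true := by
              cases h : A' b with
              | true => rfl
              | false => exact absurd (hXmem.2 ⟨hbPA, hAb, h⟩) hXb
            simp [unplug, hA'b, hAb, hXb]
        · have hAb' : A b = false := by
            cases h : A b with
            | false => rfl
            | true => exact absurd h hAb
          have hA'b : A' b = false := by
            cases h : A' b with
            | false => rfl
            | true => exact absurd (hle b hbProg h) (by simp [hAb'])
          simp [unplug, hA'b, hAb']
      have hbtA' : r.bodyTrueAt A' := by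
        obtain ⟨u1, u2, u3, u4⟩ := hbtU
        refine ⟨?_, ?_, ?_, ?_⟩
        · intro b hb; rw [key b (mem_atoms_of_posOrd hb)]; exact u1 b hb
        · intro b hb; rw [key b (mem_atoms_of_negOrd hb)]; exact u2 b hb
        · intro e he
          have : e.eval A' = e.eval (unplug A X) :=
            e.dep _ _ (fun b hb => key b (mem_atoms_of_inputs (List.mem_append_left _ he) hb))
          rw [this]; exact u3 e he
        · intro e he
          have : e.eval A' = e.eval (unplug A X) :=
            e.dep _ _ (fun b hb => key b (mem_atoms_of_inputs (List.mem_append_right _ he) hb))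
          rw [this]; exact u4 e he
      obtain ⟨h0, hh0, hA'h0⟩ := hA' r ⟨hrP, hbtA⟩ hbtA'
      have hh0X : h0 ∉ X := by
        intro hmem
        have : A' h0 = false := (hXmem.1 hmem).2.2
        simp [this] at hA'h0
      have hAh0 : A h0 = true := hle h0 (mem_progAtoms' hrP (mem_atoms_of_head hh0)) hA'h0
      exact Or.inr (Or.inr ⟨h0, hh0, hh0X, hAh0⟩)
    -- a0 ∈ X, so A a0 = false, contradiction
    have ha0PA : a0 ∈ PA := by
      simp only [progAtoms, Set.mem_iUnion, Finset.mem_coe] at ha0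
      obtain ⟨r0, hr0P, ha0r⟩ := ha0
      exact hPAmem hr0P ha0r
    have := huf X hXsub hXuf a0 (hXmem.2 ⟨ha0PA, hAa0, hA'a0⟩)
    simp [hAa0] at this
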